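/- Let G be a connected bipartite undirected graph with bipartition classes U and W of equal cardinality (balanced). Then G is arbitrarily regularizable: for every r > 0 there exists a vector w ≠ 0 of edge weights (possibly negative) with Bw = re, where B is the incidence matrix of G. -/

import Mathlib

open Matrix BigOperators

open Classical in
/-- An undirected graph is arbitrarily regularizable if there is a real weighting of its
edges, not identically zero, and `r > 0`, such that `B w = r e` where `B` is the
incidence matrix. -/
def ArbReg {V : Type*} [Fintype V] [DecidableEq V] (G : SimpleGraph V) : Prop :=
  ∃ (w : Sym2 V → ℝ) (r : ℝ), 0 < r ∧ w ≠ 0 ∧ (∀ e ∉ G.edgeSet, w e = 0) ∧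
    G.incMatrix ℝ *ᵥ w = fun _ => r

/-- `U` together with its complement is a bipartition of `G`. -/
def IsBipartition {V : Type*} (G : SimpleGraph V) (U : Set V) : Prop :=
  ∀ ⦃u v⦄, G.Adj u v → ((u ∈ U) ↔ (v ∉ U))

open Classical in
/-- A connected balanced bipartite graph is arbitrarily regularizable: for every `r > 0`
the system `B w = r e` has a solution `w ≠ 0`. -/
theorem connected_balanced_bipartite_arbitrarily_regularizable
    {V : Type*} [Fintype V] [DecidableEq V] (G : SimpleGraph V)
    (hc : G.Connected) (U : Set V) (hU : IsBipartition G U)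
    (hbal : U.ncard = Uᶜ.ncard) :
    (∀ r : ℝ, 0 < r → ∃ w : Sym2 V → ℝ, w ≠ 0 ∧ (∀ e ∉ G.edgeSet, w e = 0) ∧
      G.incMatrix ℝ *ᵥ w = fun _ => r) ∧ ArbReg G := by
  classical
  obtain ⟨v0⟩ := hc.nonempty
  have key : ∀ r : ℝ, 0 < r → ∃ w : Sym2 V → ℝ, w ≠ 0 ∧ (∀ e ∉ G.edgeSet, w e = 0) ∧
      G.incMatrix ℝ *ᵥ w = fun _ => r := by
    intro r hr
    set B := G.incMatrix ℝ with hB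
    set S : Submodule ℝ (V → ℝ) := LinearMap.range B.mulVecLin with hS
    have hmem : (fun _ : V => r) ∈ S := by
      by_contra hmem
      obtain ⟨φ, hφr, hφ⟩ := S.exists_dual_map_eq_bot_of_notMem hmem inferInstance
      have hvanish : ∀ y ∈ S, φ y = 0 := by
        intro y hy
        have : φ y ∈ S.map φ := Submodule.mem_map_of_mem hy
        rwa [hφ, Submodule.mem_bot] at this
      set x : V → ℝ := fun v => φ (Pi.single v 1) with hx
      have phi_eq : ∀ y : V → ℝ, φ y = ∑ v, y v * x v := by
        intro y
        conv_lhs => rw [pi_eq_sum_univ y]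
        rw [map_sum]
        refine Finset.sum_congr rfl fun i _ => ?_
        rw [_root_.map_smul]
        have : (fun j => if i = j then (1 : ℝ) else 0) = Pi.single i 1 := by
          funext j; simp [Pi.single_apply, eq_comm]
        rw [this]
        simp [hx, smul_eq_mul]
      -- on each edge, x u + x v = 0
      have hedge : ∀ ⦃u v : V⦄, G.Adj u v → x u + x v = 0 := by
        intro u v huv
        have hcol : (B *ᵥ Pi.single s(u,v) 1) ∈ S := ⟨Pi.single s(u,v) 1, rfl⟩
        have h0 := hvanish _ hcol
        rw [phi_eq] at h0
        have hBval : ∀ i : V, (B *ᵥ Pi.single s(u,v) 1) i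
            = if i = u ∨ i = v then (1:ℝ) else 0 := by
          intro i
          simp only [mulVec_single, mul_one]
          by_cases hi : i = u ∨ i = v
          · have : s(u,v) ∈ G.incidenceSet i := by
              refine ⟨huv, ?_⟩
              rw [Sym2.mem_iff]; exact hi
            simp [hB, SimpleGraph.incMatrix_apply, Set.indicator_of_mem this, hi]
          · have : s(u,v) ∉ G.incidenceSet i := by
              intro hmem'
              exact hi (Sym2.mem_iff.mp hmem'.2)
            simp [hB, SimpleGraph.incMatrix_apply, Set.indicator_of_notMem this, hi]
        have hsum : ∑ i, (B *ᵥ Pi.single s(u,v) 1) i * x i = x u + x v := by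
          calc ∑ i, (B *ᵥ Pi.single s(u,v) 1) i * x i
              = ∑ i, (if i = u ∨ i = v then x i else 0) := by
                refine Finset.sum_congr rfl fun i _ => ?_
                rw [hBval i]
                by_cases hi : i = u ∨ i = v <;> simp [hi]
            _ = ∑ i ∈ ({u, v} : Finset V), x i := by
                rw [← Finset.sum_filter]
                congr 1
                ext i
                simp [or_comm]
            _ = x u + x v := Finset.sum_pair huv.ne
        rw [← hsum, ← h0]
      -- the "signed" version of x is constant on the connected graph
      set y : V → ℝ := fun v => if v ∈ U then x v else -x v with hy
      have hadjy : ∀ ⦃u v : V⦄, G.Adj u v → y u = y v := by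
        intro u v huv
        have hsum := hedge huv
        by_cases hu : u ∈ U
        · have hv : v ∉ U := (hU huv).mp hu
          simp only [hy, if_pos hu, if_neg hv]
          linarith
        · have hv : v ∈ U := not_not.mp (fun h => hu ((hU huv).mpr h))
          simp only [hy, if_neg hu, if_pos hv]
          linarith
      have hwalk : ∀ ⦃u v : V⦄, G.Walk u v → y u = y v := by
        intro u v p
        induction p with
        | nil => rfl
        | cons h _ ih => exact (hadjy h).trans ih
      have hconst : ∀ v : V, y v = y v0 := fun v =>
        (hwalk (hc.preconnected v v0).some)
      set c : ℝ := y v0 with hcdef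
      have hxval : ∀ v : V, x v = if v ∈ U then c else -c := by
        intro v
        have := hconst v
        by_cases hv : v ∈ U
        · simp only [hy, if_pos hv] at this; simp [hv, this]
        · simp only [hy, if_neg hv] at this; simp [hv, ← this]
      -- the total sum of x is zero by balance
      have hcards : (Finset.univ.filter (· ∈ U)).card
          = (Finset.univ.filter (· ∉ U)).card := by
        have h1 : (Finset.univ.filter (· ∈ U)) = U.toFinset := by
          ext v; simp
        have h2 : (Finset.univ.filter (· ∉ U)) = Uᶜ.toFinset := by
          ext v; simp
        rw [h1, h2, ← Set.ncard_eq_toFinset_card', ← Set.ncard_eq_toFinset_card']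
        exact hbal
      have hsumx : ∑ v, x v = 0 := by
        calc ∑ v, x v = ∑ v, (if v ∈ U then c else -c) :=
              Finset.sum_congr rfl fun v _ => hxval v
          _ = (∑ v ∈ Finset.univ.filter (· ∈ U), c)
              + ∑ v ∈ Finset.univ.filter (· ∉ U), -c := Finset.sum_ite _ _
          _ = (Finset.univ.filter (· ∈ U)).card • c
              + (Finset.univ.filter (· ∉ U)).card • (-c) := by
                rw [Finset.sum_const, Finset.sum_const]
          _ = 0 := by rw [hcards]; simp
      have : φ (fun _ => r) = 0 := by
        rw [phi_eq]
        have : ∑ v, r * x v = r * ∑ v, x v := by rw [Finset.mul_sum]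
        rw [this, hsumx, mul_zero]
      exact hφr this
    obtain ⟨w0, hw0⟩ := hmem
    set w : Sym2 V → ℝ := fun e => if e ∈ G.edgeSet then w0 e else 0 with hw
    have hBw : B *ᵥ w = fun _ => r := by
      have : B *ᵥ w = B *ᵥ w0 := by
        funext i
        simp only [mulVec, dotProduct]
        refine Finset.sum_congr rfl fun e _ => ?_
        by_cases he : e ∈ G.edgeSet
        · simp [hw, he]
        · have hBz : B i e = 0 := by
            rw [hB, SimpleGraph.incMatrix_apply, Set.indicator_of_notMem]
            intro hmem'
            exact he hmem'.1
          simp [hBz]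
      rw [this]
      rw [← Matrix.mulVecLin_apply, hw0]
    refine ⟨w, ?_, ?_, hBw⟩
    · intro h0
      have := congrFun hBw v0
      rw [h0] at this
      simp [mulVec] at this
      exact hr.ne this
    · intro e he; simp [hw, he]
  exact ⟨key, by
    obtain ⟨w, hw1, hw2, hw3⟩ := key 1 one_pos
    exact ⟨w, 1, one_pos, hw1, hw2, hw3⟩⟩
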